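/- Let x ∈ V(ℤ) with x ∉ 𝔗' ∪ 𝔘', and suppose Δ(x) ≤ Δ(𝒱ᵢ(x)) for all i ∈ {1,2,3}. Then Δ(x) ≤ Δ(𝒱ⱼ(𝒱ᵢ(x))) for all i, j ∈ {1,2,3}; that is, x is a last vertex of its mapping-class-group orbit. -/

import Mathlib

/-- The Vieta involution in coordinate `i`:
`x ↦ Function.update x i (αᵢ − xⱼxₗ − xᵢ)` where `j = i+1`, `l = i+2` (mod 3). -/
def vAct (α : Fin 3 → ℤ) (i : Fin 3) (x : Fin 3 → ℤ) : Fin 3 → ℤ :=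
  Function.update x i (α i - x (i + 1) * x (i + 2) - x i)

/-- Membership in the integral cubic surface `V(ℤ)`. -/
def onV (α : Fin 3 → ℤ) (β : ℤ) (x : Fin 3 → ℤ) : Prop :=
  x 0 ^ 2 + x 1 ^ 2 + x 2 ^ 2 + x 0 * x 1 * x 2
    - α 0 * x 0 - α 1 * x 1 - α 2 * x 2 - β = 0

/-- The height function `Δ(x) = |x₁| + |x₂| + |x₃|`. -/
def delta (x : Fin 3 → ℤ) : ℤ := |x 0| + |x 1| + |x 2|

/-- Membership in the finite exceptional set `𝔗`. -/
def inT (α : Fin 3 → ℤ) (β : ℤ) (x : Fin 3 → ℤ) : Prop :=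
  onV α β x ∧ ∃ σ : Equiv.Perm (Fin 3),
    |x (σ 0)| ≤ 1 ∨ |x (σ 1) * x (σ 2)| ≤ max (3 * |α (σ 0)|) 4

/-- Membership in the exceptional set `𝔘`. -/
def inU (α : Fin 3 → ℤ) (β : ℤ) (x : Fin 3 → ℤ) : Prop :=
  onV α β x ∧ ¬ inT α β x ∧ ∃ σ : Equiv.Perm (Fin 3),
    |x (σ 0)| = 2 ∧ delta (vAct α (σ 1) x) ≤ delta x ∧
      delta (vAct α (σ 2) x) ≤ delta x

/-- `y` lies in the `Γ`-orbit of `x`: it is obtained from `x` by a finite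
sequence of Vieta involutions. -/
def gammaRel (α : Fin 3 → ℤ) (x y : Fin 3 → ℤ) : Prop :=
  ∃ L : List (Fin 3), y = L.foldl (fun z i => vAct α i z) x

/-- `y` lies in the `Γ₀`-orbit (mapping class group orbit) of `x`: it is
obtained from `x` by an even-length sequence of Vieta involutions. -/
def gamma0Rel (α : Fin 3 → ℤ) (x y : Fin 3 → ℤ) : Prop :=
  ∃ L : List (Fin 3), L.length % 2 = 0 ∧ y = L.foldl (fun z i => vAct α i z) x

/-- `y` is a descendent of `x`: obtained by a finite sequence of Vieta
involutions along which `Δ` is non-increasing at every step. -/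
def descendent (α : Fin 3 → ℤ) (x y : Fin 3 → ℤ) : Prop :=
  ∃ L : List (Fin 3), y = L.foldl (fun z i => vAct α i z) x ∧
    ∀ t < L.length,
      delta ((L.take (t + 1)).foldl (fun z i => vAct α i z) x) ≤
        delta ((L.take t).foldl (fun z i => vAct α i z) x)

/-- Membership in `𝔗' = {𝒱ᵢ(x), 𝒱ⱼ𝒱ᵢ(x) : x ∈ 𝔗}`. -/
def inT' (α : Fin 3 → ℤ) (β : ℤ) (x : Fin 3 → ℤ) : Prop :=
  ∃ y, inT α β y ∧
    ((∃ i, x = vAct α i y) ∨ ∃ i j, x = vAct α j (vAct α i y))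

/-- Membership in `𝔘' = {𝒱ᵢ(x), 𝒱ⱼ𝒱ᵢ(x) : x ∈ 𝔘}`. -/
def inU' (α : Fin 3 → ℤ) (β : ℤ) (x : Fin 3 → ℤ) : Prop :=
  ∃ y, inU α β y ∧
    ((∃ i, x = vAct α i y) ∨ ∃ i j, x = vAct α j (vAct α i y))


lemma vAct_invol (α : Fin 3 → ℤ) (i : Fin 3) (x : Fin 3 → ℤ) : vAct α i (vAct α i x) = x := by
  fin_cases i <;> funext k <;> fin_cases k <;> simp [vAct, Function.update]

lemma onV_vAct (α : Fin 3 → ℤ) (β : ℤ) (x : Fin 3 → ℤ) (i : Fin 3) (hx : onV α β x) :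
    onV α β (vAct α i x) := by
  unfold onV at hx
  fin_cases i <;> simp [onV, vAct, Function.update] <;> linear_combination hx

lemma delta_vAct0 (α : Fin 3 → ℤ) (y : Fin 3 → ℤ) :
    delta (vAct α 0 y) = |α 0 - y 1 * y 2 - y 0| + |y 1| + |y 2| := by
  simp [delta, vAct, Function.update]
lemma delta_vAct1 (α : Fin 3 → ℤ) (y : Fin 3 → ℤ) :
    delta (vAct α 1 y) = |y 0| + |α 1 - y 2 * y 0 - y 1| + |y 2| := by
  simp [delta, vAct, Function.update]
lemma delta_vAct2 (α : Fin 3 → ℤ) (y : Fin 3 → ℤ) :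
    delta (vAct α 2 y) = |y 0| + |y 1| + |α 2 - y 0 * y 1 - y 2| := by
  simp [delta, vAct, Function.update]

lemma habs (b c : ℤ) (h : 3 ≤ |c|) : 3 * |b| ≤ |b * c| := by
  rw [abs_mul]; nlinarith [abs_nonneg b]

lemma core1 (a b A p : ℤ) (hp : 3 * |A| < |p|) (h3 : 3 * |b| ≤ |p|)
    (ha : |A - p - a| ≤ |a|) : |b| < |a| := by
  have h1 : |p| ≤ |A| + |a| + |a| := by
    calc |p| = |(A - a) - (A - p - a)| := by ring_nf
    _ ≤ |A - a| + |A - p - a| := abs_sub _ _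
    _ ≤ (|A| + |a|) + |a| := add_le_add (abs_sub A a) ha
  linarith

lemma notT_facts (α : Fin 3 → ℤ) (β : ℤ) (x : Fin 3 → ℤ) (hV : onV α β x) (hT : ¬ inT α β x) :
    (2 ≤ |x 0| ∧ 2 ≤ |x 1| ∧ 2 ≤ |x 2|) ∧
    3 * |α 0| < |x 1 * x 2| ∧ 3 * |α 1| < |x 0 * x 2| ∧ 3 * |α 2| < |x 0 * x 1| := by
  have h : ∀ σ : Equiv.Perm (Fin 3),
      ¬(|x (σ 0)| ≤ 1 ∨ |x (σ 1) * x (σ 2)| ≤ max (3 * |α (σ 0)|) 4) := by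
    intro σ hσ; exact hT ⟨hV, σ, hσ⟩
  have h0 := h (Equiv.refl _)
  have h1 := h (Equiv.swap 0 1)
  have h2 := h (Equiv.swap 0 2)
  push_neg at h0 h1 h2
  simp [Equiv.swap_apply_def] at h0 h1 h2
  refine ⟨⟨by linarith [h0.1], by linarith [h1.1], by linarith [h2.1]⟩, (by rw [abs_mul]; exact h0.2.1), (by rw [abs_mul]; exact h1.2.1), ?_⟩
  rw [mul_comm (x 0) (x 1), abs_mul]; exact h2.2.1

lemma no_two_descents (α : Fin 3 → ℤ) (β : ℤ) (y : Fin 3 → ℤ) (hV : onV α β y)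
    (hT : ¬ inT α β y) (hU : ¬ inU α β y) (i j : Fin 3) (hij : i ≠ j)
    (hi : delta (vAct α i y) ≤ delta y) (hj : delta (vAct α j y) ≤ delta y) : False := by
  obtain ⟨⟨c0, c1, c2⟩, P0, P1, P2⟩ := notT_facts α β y hV hT
  have hU' : ∀ σ : Equiv.Perm (Fin 3),
      ¬(|y (σ 0)| = 2 ∧ delta (vAct α (σ 1) y) ≤ delta y ∧ delta (vAct α (σ 2) y) ≤ delta y) :=
    fun σ hσ => hU ⟨hV, hT, σ, hσ⟩
  have hcases : ∀ m : Fin 3, m = 0 ∨ m = 1 ∨ m = 2 := by decide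
  rcases hcases i with rfl|rfl|rfl <;> rcases hcases j with rfl|rfl|rfl
  · exact hij rfl
  · -- (0,1), k=2
    have hk2 := hU' ⟨![2,0,1], ![1,2,0], by decide, by decide⟩
    have hk : ¬ |y 2| = 2 := fun h => hk2 ⟨h, hi, hj⟩
    have h3 : 3 ≤ |y 2| := Int.lt_iff_add_one_le.mp (lt_of_le_of_ne c2 (Ne.symm hk))
    rw [delta_vAct0] at hi; rw [delta_vAct1] at hj
    unfold delta at hi hj
    have l1 : |y 1| < |y 0| := core1 (y 0) (y 1) (α 0) (y 1 * y 2) P0 (habs (y 1) (y 2) h3) (by linarith)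
    have l2 : |y 0| < |y 1| := core1 (y 1) (y 0) (α 1) (y 2 * y 0) (by rw [mul_comm (y 2) (y 0)]; exact P1) (by rw [mul_comm (y 2) (y 0)]; exact habs (y 0) (y 2) h3) (by linarith)
    exact absurd l2 (lt_asymm l1)
  · -- (0,2), k=1
    have hk2 := hU' ⟨![1,0,2], ![1,0,2], by decide, by decide⟩
    have hk : ¬ |y 1| = 2 := fun h => hk2 ⟨h, hi, hj⟩
    have h3 : 3 ≤ |y 1| := Int.lt_iff_add_one_le.mp (lt_of_le_of_ne c1 (Ne.symm hk))
    rw [delta_vAct0] at hi; rw [delta_vAct2] at hj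
    unfold delta at hi hj
    have l1 : |y 2| < |y 0| := core1 (y 0) (y 2) (α 0) (y 1 * y 2) P0 (by rw [mul_comm (y 1) (y 2)]; exact habs (y 2) (y 1) h3) (by linarith)
    have l2 : |y 0| < |y 2| := core1 (y 2) (y 0) (α 2) (y 0 * y 1) P2 (habs (y 0) (y 1) h3) (by linarith)
    exact absurd l2 (lt_asymm l1)
  · -- (1,0), k=2
    have hk2 := hU' ⟨![2,1,0], ![2,1,0], by decide, by decide⟩
    have hk : ¬ |y 2| = 2 := fun h => hk2 ⟨h, hi, hj⟩
    have h3 : 3 ≤ |y 2| := Int.lt_iff_add_one_le.mp (lt_of_le_of_ne c2 (Ne.symm hk))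
    rw [delta_vAct1] at hi; rw [delta_vAct0] at hj
    unfold delta at hi hj
    have l1 : |y 0| < |y 1| := core1 (y 1) (y 0) (α 1) (y 2 * y 0) (by rw [mul_comm (y 2) (y 0)]; exact P1) (by rw [mul_comm (y 2) (y 0)]; exact habs (y 0) (y 2) h3) (by linarith)
    have l2 : |y 1| < |y 0| := core1 (y 0) (y 1) (α 0) (y 1 * y 2) P0 (habs (y 1) (y 2) h3) (by linarith)
    exact absurd l2 (lt_asymm l1)
  · exact hij rfl
  · -- (1,2), k=0
    have hk2 := hU' ⟨![0,1,2], ![0,1,2], by decide, by decide⟩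
    have hk : ¬ |y 0| = 2 := fun h => hk2 ⟨h, hi, hj⟩
    have h3 : 3 ≤ |y 0| := Int.lt_iff_add_one_le.mp (lt_of_le_of_ne c0 (Ne.symm hk))
    rw [delta_vAct1] at hi; rw [delta_vAct2] at hj
    unfold delta at hi hj
    have l1 : |y 2| < |y 1| := core1 (y 1) (y 2) (α 1) (y 2 * y 0) (by rw [mul_comm (y 2) (y 0)]; exact P1) (habs (y 2) (y 0) h3) (by linarith)
    have l2 : |y 1| < |y 2| := core1 (y 2) (y 1) (α 2) (y 0 * y 1) P2 (by rw [mul_comm (y 0) (y 1)]; exact habs (y 1) (y 0) h3) (by linarith)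
    exact absurd l2 (lt_asymm l1)
  · -- (2,0), k=1
    have hk2 := hU' ⟨![1,2,0], ![2,0,1], by decide, by decide⟩
    have hk : ¬ |y 1| = 2 := fun h => hk2 ⟨h, hi, hj⟩
    have h3 : 3 ≤ |y 1| := Int.lt_iff_add_one_le.mp (lt_of_le_of_ne c1 (Ne.symm hk))
    rw [delta_vAct2] at hi; rw [delta_vAct0] at hj
    unfold delta at hi hj
    have l1 : |y 0| < |y 2| := core1 (y 2) (y 0) (α 2) (y 0 * y 1) P2 (habs (y 0) (y 1) h3) (by linarith)
    have l2 : |y 2| < |y 0| := core1 (y 0) (y 2) (α 0) (y 1 * y 2) P0 (by rw [mul_comm (y 1) (y 2)]; exact habs (y 2) (y 1) h3) (by linarith)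
    exact absurd l2 (lt_asymm l1)
  · -- (2,1), k=0
    have hk2 := hU' ⟨![0,2,1], ![0,2,1], by decide, by decide⟩
    have hk : ¬ |y 0| = 2 := fun h => hk2 ⟨h, hi, hj⟩
    have h3 : 3 ≤ |y 0| := Int.lt_iff_add_one_le.mp (lt_of_le_of_ne c0 (Ne.symm hk))
    rw [delta_vAct2] at hi; rw [delta_vAct1] at hj
    unfold delta at hi hj
    have l1 : |y 1| < |y 2| := core1 (y 2) (y 1) (α 2) (y 0 * y 1) P2 (by rw [mul_comm (y 0) (y 1)]; exact habs (y 1) (y 0) h3) (by linarith)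
    have l2 : |y 2| < |y 1| := core1 (y 1) (y 2) (α 1) (y 2 * y 0) (by rw [mul_comm (y 2) (y 0)]; exact P1) (habs (y 2) (y 0) h3) (by linarith)
    exact absurd l2 (lt_asymm l1)
  · exact hij rfl

/-- If `x ∈ V(ℤ) \ (𝔗' ∪ 𝔘')` is a last vertex for `Γ`, then it is a last
vertex for the mapping class group action. -/
theorem cor_3_4_i (α : Fin 3 → ℤ) (β : ℤ) (x : Fin 3 → ℤ)
    (hx : onV α β x) (hT : ¬ inT' α β x) (hU : ¬ inU' α β x)
    (hlast : ∀ i : Fin 3, delta x ≤ delta (vAct α i x)) :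
    ∀ i j : Fin 3, delta x ≤ delta (vAct α j (vAct α i x)) := by
  intro i j
  rcases eq_or_ne j i with rfl | hij
  · rw [vAct_invol]
  · by_contra hcon
    push_neg at hcon
    have hyV : onV α β (vAct α i x) := onV_vAct α β x i hx
    have hxy : vAct α i (vAct α i x) = x := vAct_invol α i x
    have hyT : ¬ inT α β (vAct α i x) := fun h => hT ⟨_, h, Or.inl ⟨i, hxy.symm⟩⟩
    have hyU : ¬ inU α β (vAct α i x) := fun h => hU ⟨_, h, Or.inl ⟨i, hxy.symm⟩⟩
    refine no_two_descents α β (vAct α i x) hyV hyT hyU i j hij.symm ?_ ?_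
    · rw [hxy]; exact hlast i
    · exact le_trans hcon.le (hlast i)
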